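/- A linear functional φ on the space of binary forms of degree d can be written as a sum of r evaluations at distinct points of P^1 if and only if the space A = {f ∈ S_r : φ(f·g) = 0 for all g ∈ S_{d−r}} contains a polynomial with r distinct roots (i.e., A is not contained in the discriminant hypersurface Δ_r). -/

import Mathlib

open MvPolynomial Finset

noncomputable section

def linForm (K : Type) [Field K] (c : Fin 2 → K) : MvPolynomial (Fin 2) K :=
  C (c 0) * X 0 + C (c 1) * X 1

/-- `α` is not a scalar multiple of `β` (for nonzero vectors: distinct points of `ℙ¹`). -/
def NonProp (K : Type) [Field K] (α β : Fin 2 → K) : Prop := ∀ t : K, α ≠ t • β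

/-- The Waring rank of a binary form: the least `r` such that `q` is a sum of `r`
`d`-th powers of linear forms. -/
def waringRank (K : Type) [Field K] (d : ℕ) (q : MvPolynomial (Fin 2) K) : ℕ :=
  sInf {r : ℕ | ∃ L : Fin r → Fin 2 → K, q = ∑ i, linForm K (L i) ^ d}

namespace Stmt1Aux

variable {K : Type} [Field K]

lemma eval_linForm (α c : Fin 2 → K) : eval α (linForm K c) = c 0 * α 0 + c 1 * α 1 := by
  simp [linForm]

lemma linForm_isHom (c : Fin 2 → K) : (linForm K c).IsHomogeneous 1 := by
  have h0 : (C (c 0) * X 0 : MvPolynomial (Fin 2) K).IsHomogeneous 1 := by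
    simpa using (isHomogeneous_C _ (c 0)).mul (isHomogeneous_X _ 0)
  have h1 : (C (c 1) * X 1 : MvPolynomial (Fin 2) K).IsHomogeneous 1 := by
    simpa using (isHomogeneous_C _ (c 1)).mul (isHomogeneous_X _ 1)
  exact h0.add h1

lemma linForm_ne_zero {c : Fin 2 → K} (hc : c ≠ 0) : linForm K c ≠ 0 := by
  intro h
  apply hc
  funext j
  have h0 := congrArg (eval (![1, 0] : Fin 2 → K)) h
  have h1 := congrArg (eval (![0, 1] : Fin 2 → K)) h
  rw [eval_linForm] at h0 h1
  simp only [Matrix.cons_val_zero, Matrix.cons_val_one, Matrix.head_cons, map_zero] at h0 h1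
  fin_cases j
  · simpa using h0
  · simpa using h1

lemma prod_linForm_isHom {r : ℕ} (β : Fin r → Fin 2 → K) :
    (∏ i, linForm K (β i)).IsHomogeneous r := by
  have := MvPolynomial.IsHomogeneous.prod (univ : Finset (Fin r))
    (fun i => linForm K (β i)) (fun _ => 1) (fun i _ => linForm_isHom (β i))
  simpa using this

lemma cross_prop {α β : Fin 2 → K} (hβ : β ≠ 0) (h : α 0 * β 1 = α 1 * β 0) :
    ∃ t : K, α = t • β := by
  by_cases hb0 : β 0 = 0
  · have hb1 : β 1 ≠ 0 := by
      intro hb1; apply hβ; funext j; fin_cases j <;> simp [hb0, hb1]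
    have ha0 : α 0 = 0 := by
      have := h; rw [hb0, mul_zero] at this
      exact (mul_eq_zero.mp this).resolve_right hb1
    exact ⟨α 1 / β 1, by
      funext j; fin_cases j <;> simp [ha0, hb0, Pi.smul_apply, div_mul_cancel₀, hb1]⟩
  · refine ⟨α 0 / β 0, ?_⟩
    funext j; fin_cases j
    · simp [Pi.smul_apply, div_mul_cancel₀, hb0]
    · have : α 1 = α 0 / β 0 * β 1 := by field_simp; linear_combination -h
      simpa [Pi.smul_apply] using this

def rot (c : Fin 2 → K) : Fin 2 → K := ![-(c 1), c 0]

lemma rot_apply0 (c : Fin 2 → K) : rot c 0 = -(c 1) := rfl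
lemma rot_apply1 (c : Fin 2 → K) : rot c 1 = c 0 := rfl

lemma eval_linForm_rot_self (β : Fin 2 → K) : eval β (linForm K (rot β)) = 0 := by
  rw [eval_linForm, rot_apply0, rot_apply1]; ring

lemma eval_rot_linForm_self (β : Fin 2 → K) : eval (rot β) (linForm K β) = 0 := by
  rw [eval_linForm, rot_apply0, rot_apply1]; ring

lemma rot_ne_zero {β : Fin 2 → K} (hβ : β ≠ 0) : rot β ≠ 0 := by
  intro h; apply hβ
  funext j
  have h0 := congrFun h 0
  have h1 := congrFun h 1
  rw [rot_apply0] at h0; rw [rot_apply1] at h1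
  fin_cases j
  · simpa using h1
  · simpa using (neg_eq_zero.mp (by simpa using h0))

lemma rot_nonProp {α β : Fin 2 → K} (h : NonProp K α β) : NonProp K (rot α) (rot β) := by
  intro t ht
  apply h t
  funext j
  have h0 := congrFun ht 0
  have h1 := congrFun ht 1
  rw [rot_apply0, Pi.smul_apply, rot_apply0, smul_eq_mul] at h0
  rw [rot_apply1, Pi.smul_apply, rot_apply1, smul_eq_mul] at h1
  fin_cases j
  · simpa using h1
  · have := neg_injective (by rw [h0]; ring_nf : -(α 1) = -(t * β 1))
    simpa using this

lemma eval_linForm_rot_ne {α β : Fin 2 → K} (hβ : β ≠ 0) (h : NonProp K α β) :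
    eval α (linForm K (rot β)) ≠ 0 := by
  intro h0
  rw [eval_linForm, rot_apply0, rot_apply1] at h0
  have : α 0 * β 1 = α 1 * β 0 := by linear_combination -h0
  obtain ⟨t, ht⟩ := cross_prop hβ this
  exact h t ht

open Classical in
def goodγ (α : Fin 2 → K) : Fin 2 → K := if α 0 = 0 then ![0, 1] else ![1, 0]

lemma eval_linForm_goodγ_ne {α : Fin 2 → K} (hα : α ≠ 0) :
    eval α (linForm K (goodγ α)) ≠ 0 := by
  rw [eval_linForm, goodγ]
  by_cases h : α 0 = 0
  · have h1 : α 1 ≠ 0 := by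
      intro h1; apply hα; funext j; fin_cases j <;> simp [h, h1]
    simp [h, h1]
  · simpa [h] using h

def mu (d k : ℕ) : Fin 2 →₀ ℕ := Finsupp.single 0 k + Finsupp.single 1 (d - k)

def mon (K : Type) [Field K] (d k : ℕ) : MvPolynomial (Fin 2) K := X 0 ^ k * X 1 ^ (d - k)

lemma mon_eq_monomial (d k : ℕ) : mon K d k = monomial (mu d k) (1 : K) := by
  rw [mon, mu, X_pow_eq_monomial, X_pow_eq_monomial, monomial_mul, one_mul]

lemma mu_apply0 (d k : ℕ) : mu d k 0 = k := by simp [mu]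

lemma mu_inj (d : ℕ) : Function.Injective (mu d) := by
  intro a b h
  have := congrArg (fun m => m 0) h
  simpa [mu_apply0] using this

lemma mon_isHom {d k : ℕ} (hk : k ≤ d) : (mon K d k).IsHomogeneous d := by
  have h0 : (X 0 ^ k : MvPolynomial (Fin 2) K).IsHomogeneous k := by
    simpa using (isHomogeneous_X _ 0).pow k
  have h1 : (X 1 ^ (d - k) : MvPolynomial (Fin 2) K).IsHomogeneous (d - k) := by
    simpa using (isHomogeneous_X _ 1).pow (d - k)
  have := h0.mul h1
  rwa [Nat.add_sub_cancel' hk] at this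

lemma homog_decomp {d : ℕ} {q : MvPolynomial (Fin 2) K} (hq : q.IsHomogeneous d) :
    q = ∑ k ∈ range (d + 1), (coeff (mu d k) q) • mon K d k := by
  classical
  have hsub : q.support ⊆ (range (d + 1)).image (mu d) := by
    intro m hm
    have hdeg : (m 0) + (m 1) = d := by
      have := hq (mem_support_iff.mp hm)
      simpa [Finsupp.weight_apply, Finsupp.sum_fintype, Fin.sum_univ_two] using this
    have hm0 : m 0 ≤ d := le_of_add_le_left hdeg.le
    refine mem_image.mpr ⟨m 0, mem_range.mpr (Nat.lt_succ_of_le hm0), ?_⟩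
    ext j
    fin_cases j
    · simp [mu_apply0]
    · simp [mu]; omega
  calc q = ∑ m ∈ q.support, monomial m (coeff m q) := (support_sum_monomial_coeff q).symm
    _ = ∑ m ∈ (range (d + 1)).image (mu d), monomial m (coeff m q) := by
        refine sum_subset hsub (fun m _ hm => ?_)
        rw [notMem_support_iff.mp hm, monomial_zero]
    _ = ∑ k ∈ range (d + 1), monomial (mu d k) (coeff (mu d k) q) := by
        rw [sum_image (fun a _ b _ h => mu_inj d h)]
    _ = ∑ k ∈ range (d + 1), (coeff (mu d k) q) • mon K d k := by
        refine sum_congr rfl fun k _ => ?_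
        rw [mon_eq_monomial, smul_monomial, smul_eq_mul, mul_one]

lemma eval_mon (d k : ℕ) (α : Fin 2 → K) : eval α (mon K d k) = α 0 ^ k * α 1 ^ (d - k) := by
  simp [mon]

lemma eval_homog {d : ℕ} {q : MvPolynomial (Fin 2) K} (hq : q.IsHomogeneous d) (α : Fin 2 → K) :
    eval α q = ∑ k ∈ range (d + 1), coeff (mu d k) q * (α 0 ^ k * α 1 ^ (d - k)) := by
  conv_lhs => rw [homog_decomp hq]
  rw [map_sum]
  exact sum_congr rfl fun k _ => by rw [smul_eq_C_mul, map_mul, eval_C, eval_mon]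

lemma dual_homog {d : ℕ} (φ : Module.Dual K (MvPolynomial (Fin 2) K))
    {q : MvPolynomial (Fin 2) K} (hq : q.IsHomogeneous d) :
    φ q = ∑ k ∈ range (d + 1), coeff (mu d k) q * φ (mon K d k) := by
  conv_lhs => rw [homog_decomp hq]
  rw [map_sum]
  exact sum_congr rfl fun k _ => by rw [map_smul, smul_eq_mul]

lemma homog_eq_zero {d : ℕ} {q : MvPolynomial (Fin 2) K} (hq : q.IsHomogeneous d)
    (h : ∀ k ∈ range (d + 1), coeff (mu d k) q = 0) : q = 0 := by
  rw [homog_decomp hq]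
  exact sum_eq_zero fun k hk => by rw [h k hk, zero_smul]

lemma sum_eval_eq_zero {d r : ℕ} (α : Fin r → Fin 2 → K) (c : Fin r → K)
    (hc : ∀ k ∈ range (d + 1), ∑ i, c i * (α i 0 ^ k * α i 1 ^ (d - k)) = 0)
    {q : MvPolynomial (Fin 2) K} (hq : q.IsHomogeneous d) :
    ∑ i, c i * eval (α i) q = 0 := by
  calc ∑ i, c i * eval (α i) q
      = ∑ i, ∑ k ∈ range (d + 1), coeff (mu d k) q * (c i * (α i 0 ^ k * α i 1 ^ (d - k))) := by
        refine sum_congr rfl fun i _ => ?_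
        rw [eval_homog hq, mul_sum]
        exact sum_congr rfl fun k _ => by ring
    _ = ∑ k ∈ range (d + 1), coeff (mu d k) q * ∑ i, c i * (α i 0 ^ k * α i 1 ^ (d - k)) := by
        rw [sum_comm]
        exact sum_congr rfl fun k _ => by rw [mul_sum]
    _ = 0 := by
        refine sum_eq_zero fun k hk => ?_
        rw [hc k hk, mul_zero]

lemma w_indep {d r : ℕ} (hr : r ≤ d) (α : Fin r → Fin 2 → K)
    (h0 : ∀ i, α i ≠ 0) (hp : ∀ i j, i ≠ j → NonProp K (α i) (α j)) :
    LinearIndependent K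
      (fun i : Fin r => fun k : Fin (d + 1) => α i 0 ^ (k : ℕ) * α i 1 ^ (d - (k : ℕ))) := by
  rw [Fintype.linearIndependent_iff]
  intro c hc i
  have hck : ∀ k ∈ range (d + 1), ∑ j, c j * (α j 0 ^ k * α j 1 ^ (d - k)) = 0 := by
    intro k hk
    have := congrFun hc ⟨k, mem_range.mp hk⟩
    simpa using this
  set h : MvPolynomial (Fin 2) K :=
    (∏ j ∈ univ.erase i, linForm K (rot (α j))) * (linForm K (goodγ (α i))) ^ (d - (r - 1))
    with hh
  have hhom : h.IsHomogeneous d := by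
    have h1 : (∏ j ∈ univ.erase i, linForm K (rot (α j))).IsHomogeneous (r - 1) := by
      have := MvPolynomial.IsHomogeneous.prod (univ.erase i)
        (fun j => linForm K (rot (α j))) (fun _ => 1) (fun j _ => linForm_isHom _)
      simpa [Finset.card_erase_of_mem (mem_univ i), card_univ] using this
    have h2 : ((linForm K (goodγ (α i))) ^ (d - (r - 1))).IsHomogeneous (d - (r - 1)) := by
      simpa using (linForm_isHom (goodγ (α i))).pow (d - (r - 1))
    have := h1.mul h2
    have hle : r - 1 ≤ d := le_trans (Nat.sub_le r 1) hr
    rwa [Nat.add_sub_cancel' hle] at this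
  have hzero : ∑ j, c j * eval (α j) h = 0 := sum_eval_eq_zero α c hck hhom
  have heval : ∀ j, j ≠ i → eval (α j) h = 0 := by
    intro j hj
    rw [hh, map_mul, map_prod]
    rw [prod_eq_zero (mem_erase.mpr ⟨hj, mem_univ j⟩) (eval_linForm_rot_self (α j)), zero_mul]
  have hsingle : c i * eval (α i) h = 0 := by
    rw [← hzero]
    symm
    exact sum_eq_single i (fun j _ hj => by rw [heval j hj, mul_zero])
      (fun hi => absurd (mem_univ i) hi)
  have hne : eval (α i) h ≠ 0 := by
    rw [hh, map_mul, map_prod, map_pow]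
    refine mul_ne_zero (prod_ne_zero_iff.mpr fun j hj => ?_)
      (pow_ne_zero _ (eval_linForm_goodγ_ne (h0 i)))
    exact eval_linForm_rot_ne (h0 j) (hp i j (Ne.symm (mem_erase.mp hj).1))
  exact (mul_eq_zero.mp hsingle).resolve_right hne

def dotD (K : Type) [Field K] (n : ℕ) : (Fin n → K) →ₗ[K] Module.Dual K (Fin n → K) :=
  LinearMap.mk₂ K (fun x y => ∑ k, x k * y k)
    (fun x x' y => by simp [add_mul, sum_add_distrib])
    (fun a x y => by simp [mul_sum, mul_assoc])
    (fun x y y' => by simp [mul_add, sum_add_distrib])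
    (fun a x y => by simp [mul_sum]; exact sum_congr rfl fun k _ => by ring)

lemma dotD_apply (n : ℕ) (x y : Fin n → K) : dotD K n x y = ∑ k, x k * y k := rfl

lemma dotD_inj (n : ℕ) : Function.Injective (dotD K n) := by
  rw [injective_iff_map_eq_zero]
  intro x hx
  funext k
  have := congrFun (congrArg DFunLike.coe hx) (Pi.single k 1)
  simpa [dotD_apply, Pi.single_apply, mul_ite] using this

end Stmt1Aux

open Stmt1Aux Module

/-- Lemma 6 (`igual`): `φ` is a combination of `r` evaluations at distinct points of `ℙ¹`
iff `A = {f ∈ S_r : φ(fg) = 0 ∀ g ∈ S_{d-r}}` contains a form with `r` distinct roots. -/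
theorem stmt1 (K : Type) [Field K] [IsAlgClosed K] [CharZero K] (d r : ℕ) (hr : r ≤ d)
    (φ : Module.Dual K (MvPolynomial (Fin 2) K)) :
    (∃ (lam : Fin r → K) (α : Fin r → Fin 2 → K),
        (∀ i, α i ≠ 0) ∧ (∀ i j, i ≠ j → NonProp K (α i) (α j)) ∧
        ∀ f : MvPolynomial (Fin 2) K, f.IsHomogeneous d →
          φ f = ∑ i, lam i * eval (α i) f) ↔
    (∃ f : MvPolynomial (Fin 2) K, f.IsHomogeneous r ∧
        (∀ g : MvPolynomial (Fin 2) K, g.IsHomogeneous (d - r) → φ (f * g) = 0) ∧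
        ∃ β : Fin r → Fin 2 → K, (∀ i, β i ≠ 0) ∧
          (∀ i j, i ≠ j → NonProp K (β i) (β j)) ∧ f = ∏ i, linForm K (β i)) := by
  constructor
  · -- forward direction
    rintro ⟨lam, α, hα0, hαp, hφ⟩
    refine ⟨∏ i, linForm K (rot (α i)), prod_linForm_isHom _, ?_, fun i => rot (α i),
      fun i => rot_ne_zero (hα0 i), fun i j hij => rot_nonProp (hαp i j hij), rfl⟩
    intro g hg
    have hfg : ((∏ i, linForm K (rot (α i))) * g).IsHomogeneous d := by
      have := (prod_linForm_isHom (fun i => rot (α i))).mul hg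
      rwa [Nat.add_sub_cancel' hr] at this
    rw [hφ _ hfg]
    refine sum_eq_zero fun i _ => ?_
    rw [map_mul, map_prod, prod_eq_zero (mem_univ i) (eval_linForm_rot_self (α i)),
      zero_mul, mul_zero]
  · -- backward direction
    rintro ⟨f, hf, hφf, β, hβ0, hβp, rfl⟩
    set α : Fin r → Fin 2 → K := fun i => rot (β i) with hα
    have hα0 : ∀ i, α i ≠ 0 := fun i => rot_ne_zero (hβ0 i)
    have hαp : ∀ i j, i ≠ j → NonProp K (α i) (α j) := fun i j hij => rot_nonProp (hβp i j hij)
    set f := ∏ i, linForm K (β i) with hfdef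
    -- vectors
    set w : Fin r → (Fin (d + 1) → K) :=
      fun i k => α i 0 ^ (k : ℕ) * α i 1 ^ (d - (k : ℕ)) with hw
    set u : Fin (d + 1) → K := fun k => φ (mon K d (k : ℕ)) with hu
    set v : Fin (d - r + 1) → (Fin (d + 1) → K) :=
      fun j k => coeff (mu d (k : ℕ)) (f * mon K (d - r) (j : ℕ)) with hv
    have hmong : ∀ j : Fin (d - r + 1), (mon K (d - r) (j : ℕ)).IsHomogeneous (d - r) :=
      fun j => mon_isHom (Nat.lt_succ_iff.mp j.isLt)
    have hfg : ∀ j : Fin (d - r + 1), (f * mon K (d - r) (j : ℕ)).IsHomogeneous d := by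
      intro j
      have := hf.mul (hmong j)
      rwa [Nat.add_sub_cancel' hr] at this
    -- f evaluates to zero at each α i
    have hevalf : ∀ i, eval (α i) f = 0 := by
      intro i
      rw [hfdef, map_prod]
      exact prod_eq_zero (mem_univ i) (eval_rot_linForm_self (β i))
    -- w ⬝ v = 0
    have hwv : ∀ i j, dotD K (d + 1) (w i) (v j) = 0 := by
      intro i j
      have h1 : eval (α i) (f * mon K (d - r) (j : ℕ)) = 0 := by
        rw [map_mul, hevalf i, zero_mul]
      rw [eval_homog (hfg j) (α i),
        ← Fin.sum_univ_eq_sum_range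
          (fun k => coeff (mu d k) (f * mon K (d - r) (j : ℕ)) * (α i 0 ^ k * α i 1 ^ (d - k)))
          (d + 1)] at h1
      rw [dotD_apply, ← h1]
      exact sum_congr rfl fun k _ => by rw [hw, hv]; ring
    -- u ⬝ v = 0
    have huv : ∀ j, dotD K (d + 1) u (v j) = 0 := by
      intro j
      have h1 : φ (f * mon K (d - r) (j : ℕ)) = 0 := hφf _ (hmong j)
      rw [dual_homog φ (hfg j),
        ← Fin.sum_univ_eq_sum_range
          (fun k => coeff (mu d k) (f * mon K (d - r) (j : ℕ)) * φ (mon K d k)) (d + 1)] at h1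
      rw [dotD_apply, ← h1]
      exact sum_congr rfl fun k _ => by rw [hu, hv]; ring
    -- independence of v
    have hf0 : f ≠ 0 := by
      rw [hfdef]
      exact prod_ne_zero_iff.mpr fun i _ => linForm_ne_zero (hβ0 i)
    have hvind : LinearIndependent K v := by
      rw [Fintype.linearIndependent_iff]
      intro c hc j
      have hp : (∑ j', c j' • (f * mon K (d - r) (j' : ℕ))) = 0 := by
        refine homog_eq_zero (d := d) (IsHomogeneous.sum _ _ _ (fun j' _ => ?_)) ?_
        · rw [smul_eq_C_mul]
          simpa using (isHomogeneous_C _ (c j')).mul (hfg j')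
        intro k hk
        have := congrFun hc ⟨k, mem_range.mp hk⟩
        simp only [Pi.zero_apply, Finset.sum_apply] at this
        rw [← this]
        rw [coeff_sum]
        exact sum_congr rfl fun j' _ => by
          rw [MvPolynomial.coeff_smul, smul_eq_mul, hv, Pi.smul_apply, smul_eq_mul]
      have hp2 : f * (∑ j', c j' • mon K (d - r) (j' : ℕ)) = 0 := by
        rw [mul_sum] at *
        rw [← hp]
        exact sum_congr rfl fun j' _ => by rw [mul_smul_comm]
      have hsum : (∑ j' : Fin (d - r + 1), c j' • mon K (d - r) (j' : ℕ)) = 0 :=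
        (mul_eq_zero.mp hp2).resolve_left hf0
      have := congrArg (coeff (mu (d - r) (j : ℕ))) hsum
      rw [coeff_sum] at this
      simp only [MvPolynomial.coeff_smul, mon_eq_monomial, coeff_monomial, map_zero] at this
      rw [Finset.sum_eq_single j] at this
      · simpa using this
      · intro j' _ hj'
        have : mu (d - r) (j' : ℕ) ≠ mu (d - r) (j : ℕ) :=
          fun h => hj' (Fin.ext (mu_inj _ h))
        simp [this]
      · exact fun hj => absurd (mem_univ j) hj
    have hwind : LinearIndependent K w := w_indep hr α hα0 hαp
    -- spans
    set Wv : Subspace K (Fin (d + 1) → K) := Submodule.span K (Set.range v) with hWv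
    set Ww : Subspace K (Fin (d + 1) → K) := Submodule.span K (Set.range w) with hWw
    have hWvrank : finrank K Wv = d - r + 1 := by
      rw [hWv, finrank_span_eq_card hvind, Fintype.card_fin]
    -- the image of Ww under dotD is inside the dual annihilator of Wv
    have hmem : ∀ i, dotD K (d + 1) (w i) ∈ Wv.dualAnnihilator := by
      intro i
      rw [Submodule.mem_dualAnnihilator]
      intro x hx
      have hker : Wv ≤ LinearMap.ker (dotD K (d + 1) (w i)) := by
        rw [hWv, Submodule.span_le]
        rintro _ ⟨j, rfl⟩
        exact LinearMap.mem_ker.mpr (hwv i j)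
      exact LinearMap.mem_ker.mp (hker hx)
    have hmaple : Submodule.map (dotD K (d + 1)) Ww ≤ Wv.dualAnnihilator := by
      rw [hWw, Submodule.map_span, Submodule.span_le]
      rintro _ ⟨_, ⟨i, rfl⟩, rfl⟩
      exact hmem i
    -- dimension count
    have hmaprank : finrank K (Submodule.map (dotD K (d + 1)) Ww) = r := by
      rw [hWw, Submodule.map_span, ← Set.range_comp,
        finrank_span_eq_card (hwind.map' _ (LinearMap.ker_eq_bot.mpr (dotD_inj (d + 1)))),
        Fintype.card_fin]
    have hannrank : finrank K (Wv.dualAnnihilator : Subspace K (Dual K (Fin (d + 1) → K))) = r := by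
      have h1 : finrank K ((Fin (d + 1) → K) ⧸ Wv) = finrank K Wv.dualAnnihilator :=
        (Subspace.quotEquivAnnihilator Wv).finrank_eq
      have h2 := Submodule.finrank_quotient_add_finrank Wv
      have h3 : finrank K (Fin (d + 1) → K) = d + 1 := by simp
      omega
    have heq : Submodule.map (dotD K (d + 1)) Ww = Wv.dualAnnihilator :=
      Submodule.eq_of_le_of_finrank_eq hmaple (by rw [hmaprank, hannrank])
    -- u is in Ww
    have humem : dotD K (d + 1) u ∈ Wv.dualAnnihilator := by
      rw [Submodule.mem_dualAnnihilator]
      intro x hx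
      have hker : Wv ≤ LinearMap.ker (dotD K (d + 1) u) := by
        rw [hWv, Submodule.span_le]
        rintro _ ⟨j, rfl⟩
        exact LinearMap.mem_ker.mpr (huv j)
      exact LinearMap.mem_ker.mp (hker hx)
    rw [← heq] at humem
    obtain ⟨u', hu'mem, hu'⟩ := humem
    have huW : u ∈ Ww := by
      have : u' = u := dotD_inj (d + 1) hu'
      rwa [← this]
    rw [hWw] at huW
    obtain ⟨lam, hlam⟩ := (Submodule.mem_span_range_iff_exists_fun K).mp huW
    refine ⟨lam, α, hα0, hαp, ?_⟩
    intro q hq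
    have hκw : ∀ i, eval (α i) q = ∑ k : Fin (d + 1), coeff (mu d (k : ℕ)) q * w i k := by
      intro i
      rw [eval_homog hq (α i), ← Fin.sum_univ_eq_sum_range
        (fun k => coeff (mu d k) q * (α i 0 ^ k * α i 1 ^ (d - k))) (d + 1)]
    calc φ q = ∑ k ∈ range (d + 1), coeff (mu d k) q * φ (mon K d k) := dual_homog φ hq
      _ = ∑ k : Fin (d + 1), coeff (mu d (k : ℕ)) q * u k :=
          (Fin.sum_univ_eq_sum_range (fun k => coeff (mu d k) q * φ (mon K d k)) (d + 1)).symm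
      _ = ∑ k : Fin (d + 1), ∑ i, lam i * (coeff (mu d (k : ℕ)) q * w i k) := by
          refine sum_congr rfl fun k _ => ?_
          rw [← hlam]
          simp only [Finset.sum_apply, Pi.smul_apply, smul_eq_mul, mul_sum]
          exact sum_congr rfl fun i _ => by ring
      _ = ∑ i, lam i * eval (α i) q := by
          rw [sum_comm]
          refine sum_congr rfl fun i _ => ?_
          rw [hκw i, mul_sum]
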